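/- There exists a family 𝒟 of cardinality the continuum (2^{ℵ₀}) consisting of countable distance value sets, each of which is dense in (0, +∞), such that no two distinct members of 𝒟 are equivalent as distance value sets. -/
import Mathlib


/-- A distance value set: a set of positive reals closed under
`(x, y) ↦ min (x + y) (sup Δ)` (which is just `x + y` when `Δ` is unbounded). -/
def IsDVS (Δ : Set ℝ) : Prop :=
  (∀ x ∈ Δ, 0 < x) ∧
  ∀ x ∈ Δ, ∀ y ∈ Δ,
    (BddAbove Δ → min (x + y) (sSup Δ) ∈ Δ) ∧ (¬ BddAbove Δ → x + y ∈ Δ)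

/-- `(x, y, z)` is a `Δ`-triangle. -/
def IsTriangle (Δ : Set ℝ) (x y z : ℝ) : Prop :=
  x ∈ Δ ∧ y ∈ Δ ∧ z ∈ Δ ∧ |x - y| ≤ z ∧ z ≤ x + y

/-- `f` witnesses the equivalence of the distance value sets `Δ` and `Λ`:
it is a bijection of `Δ` onto `Λ` preserving triangles in both directions. -/
def IsEquivWitness (Δ Λ : Set ℝ) (f : ℝ → ℝ) : Prop :=
  Set.BijOn f Δ Λ ∧
  ∀ x ∈ Δ, ∀ y ∈ Δ, ∀ z ∈ Δ,
    (IsTriangle Δ x y z ↔ IsTriangle Λ (f x) (f y) (f z))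

/-- Equivalence of distance value sets. -/
def DVSEquiv (Δ Λ : Set ℝ) : Prop := ∃ f : ℝ → ℝ, IsEquivWitness Δ Λ f

open Polynomial

noncomputable def tval : ℝ := liouvilleNumber 3

lemma tval_pos : 0 < tval :=
  Summable.tsum_pos (LiouvilleNumber.summable (by norm_num)) (fun i => by positivity) 0 (by norm_num)

lemma tval_trans : Transcendental ℚ tval := by
  have h : Transcendental ℤ tval := by
    have := transcendental_liouvilleNumber (m := 3) (by norm_num)
    simpa [tval] using this
  intro H
  exact h ((IsFractionRing.isAlgebraic_iff ℤ ℚ ℝ).mpr H)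

noncomputable def sval (c : ℕ →₀ ℚ) : ℝ := c.sum fun n a => (a : ℝ) * tval ^ (n + 1)

lemma sval_zero : sval 0 = 0 := Finsupp.sum_zero_index

lemma sval_add (c d : ℕ →₀ ℚ) : sval (c + d) = sval c + sval d :=
  Finsupp.sum_add_index' (fun n => by simp) (fun n a b => by push_cast; ring)

lemma sval_single (n : ℕ) (a : ℚ) : sval (Finsupp.single n a) = (a : ℝ) * tval ^ (n+1) :=
  Finsupp.sum_single_index (by simp)

lemma sval_smul (a : ℚ) (c : ℕ →₀ ℚ) : sval (a • c) = (a : ℝ) * sval c := by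
  rw [sval, Finsupp.sum_smul_index' (fun n => by simp)]
  rw [sval, Finsupp.mul_sum]
  congr 1; ext n b; rw [smul_eq_mul]; push_cast; ring

lemma sval_eq_zero {q : ℚ} {c : ℕ →₀ ℚ} (h : (q : ℝ) + sval c = 0) : q = 0 ∧ c = 0 := by
  classical
  set p : ℚ[X] := C q + c.sum (fun n a => C a * X ^ (n+1)) with hp
  have hev : aeval tval p = 0 := by
    rw [hp, map_add, map_finsuppSum]
    simpa [sval, Finsupp.sum] using h
  have hp0 : p = 0 := by
    by_contra hne
    exact tval_trans ⟨p, hne, hev⟩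
  have hc0 : ∀ k, p.coeff (k+1) = c k := by
    intro k
    rw [hp, coeff_add, coeff_C, if_neg (Nat.succ_ne_zero k), zero_add, Finsupp.sum,
      finset_sum_coeff]
    simp only [coeff_C_mul_X_pow]
    have : ∀ x ∈ c.support, (if k + 1 = x + 1 then c x else 0) = if x = k then c x else 0 := by
      intro x _; rcases eq_or_ne x k with rfl | hx
      · simp
      · rw [if_neg (by omega), if_neg hx]
    rw [Finset.sum_congr rfl this, Finset.sum_ite_eq' c.support k]
    by_cases hk : k ∈ c.support
    · simp [hk]
    · simp [hk, Finsupp.notMem_support_iff.mp hk]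
  have hq0 : p.coeff 0 = q := by
    rw [hp, coeff_add, coeff_C, if_pos rfl, Finsupp.sum, finset_sum_coeff]
    simp [coeff_C_mul_X_pow]
  constructor
  · rw [← hq0, hp0, coeff_zero]
  · ext k
    rw [← hc0 k, hp0, coeff_zero, Finsupp.coe_zero, Pi.zero_apply]

lemma sval_sub (c d : ℕ →₀ ℚ) : sval (c - d) = sval c - sval d := by
  have h := sval_add (c - d) d
  rw [sub_add_cancel] at h
  linarith

lemma sval_inj {q r : ℚ} {c d : ℕ →₀ ℚ} (h : (q : ℝ) + sval c = (r : ℝ) + sval d) :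
    q = r ∧ c = d := by
  have h0 : ((q - r : ℚ) : ℝ) + sval (c - d) = 0 := by
    rw [sval_sub]; push_cast; linarith
  obtain ⟨h1, h2⟩ := sval_eq_zero h0
  exact ⟨sub_eq_zero.mp h1, sub_eq_zero.mp h2⟩


def IsNatQ (a : ℚ) : Prop := ∃ m : ℕ, a = m

def Dset (S : Set ℕ) : Set ℝ :=
  {x | 0 < x ∧ ∃ q : ℚ, 0 ≤ q ∧ ∃ c : ℕ →₀ ℚ,
    (∀ n, IsNatQ (c n)) ∧ ↑c.support ⊆ S ∧ x = (q : ℝ) + sval c}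

lemma rat_mem_Dset {S : Set ℕ} {q : ℚ} (hq : 0 < q) : (q : ℝ) ∈ Dset S :=
  ⟨by exact_mod_cast hq, q, hq.le, 0, fun n => ⟨0, by simp⟩, by simp, by simp [sval_zero]⟩

lemma Dset_pos {S : Set ℕ} {x : ℝ} (hx : x ∈ Dset S) : 0 < x := hx.1

lemma add_mem_Dset {S : Set ℕ} {x y : ℝ} (hx : x ∈ Dset S) (hy : y ∈ Dset S) :
    x + y ∈ Dset S := by
  obtain ⟨hx0, q, hq, c, hc, hcs, rfl⟩ := hx
  obtain ⟨hy0, r, hr, d, hd, hds, rfl⟩ := hy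
  refine ⟨by linarith, q + r, by linarith, c + d, ?_, ?_, ?_⟩
  · intro n
    obtain ⟨m, hm⟩ := hc n; obtain ⟨m', hm'⟩ := hd n
    exact ⟨m + m', by simp only [Finsupp.add_apply, hm, hm']; push_cast; ring⟩
  · refine subset_trans ?_ (Set.union_subset hcs hds)
    have := Finsupp.support_add (g₁ := c) (g₂ := d)
    calc ((c + d).support : Set ℕ) ⊆ ↑(c.support ∪ d.support) := by exact_mod_cast this
      _ = ↑c.support ∪ ↑d.support := by simp
  · rw [sval_add]; push_cast; ring

lemma pow_mem_Dset {S : Set ℕ} {n : ℕ} (hn : n ∈ S) : tval ^ (n+1) ∈ Dset S := by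
  refine ⟨pow_pos tval_pos _, 0, le_refl _, Finsupp.single n 1, ?_, ?_, ?_⟩
  · intro k
    rcases eq_or_ne k n with rfl | hk
    · exact ⟨1, by simp⟩
    · exact ⟨0, by rw [Finsupp.single_apply_eq_zero.mpr (fun h => absurd h hk)]; simp⟩
  · refine subset_trans ?_ (Set.singleton_subset_iff.mpr hn)
    exact_mod_cast Finset.coe_subset.mpr (Finsupp.support_single_subset (a := n) (b := (1:ℚ)))
  · rw [sval_single]; push_cast; ring

lemma mem_Dset_pow {S : Set ℕ} {n : ℕ} (h : tval ^ (n+1) ∈ Dset S) : n ∈ S := by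
  obtain ⟨-, q, hq, c, hc, hcs, hx⟩ := h
  have h2 : ((0 : ℚ) : ℝ) + sval (Finsupp.single n 1) = (q : ℝ) + sval c := by
    rw [sval_single]; push_cast; rw [← hx]; ring
  obtain ⟨-, h4⟩ := sval_inj h2
  apply hcs
  rw [← h4]
  simp [Finsupp.support_single_ne_zero]

lemma Dset_dense (S : Set ℕ) (a b : ℝ) (ha : 0 < a) (hab : a < b) :
    ∃ x ∈ Dset S, a < x ∧ x < b := by
  obtain ⟨q, hq1, hq2⟩ := exists_rat_btwn hab
  have hq0 : 0 < q := by exact_mod_cast ha.trans hq1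
  exact ⟨q, rat_mem_Dset hq0, hq1, hq2⟩

lemma Dset_not_bddAbove (S : Set ℕ) : ¬ BddAbove (Dset S) := by
  rw [not_bddAbove_iff]
  intro M
  obtain ⟨q, hq⟩ := exists_rat_gt (max M 0)
  have hq0 : 0 < q := by exact_mod_cast (le_max_right M 0).trans_lt hq
  exact ⟨q, rat_mem_Dset hq0, (le_max_left M 0).trans_lt hq⟩

lemma Dset_isDVS (S : Set ℕ) : IsDVS (Dset S) := by
  refine ⟨fun x hx => Dset_pos hx, fun x hx y hy => ⟨fun hb => absurd hb (Dset_not_bddAbove S),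
    fun _ => add_mem_Dset hx hy⟩⟩

lemma Dset_countable (S : Set ℕ) : (Dset S).Countable := by
  have : Dset S ⊆ Set.range (fun p : ℚ × (ℕ →₀ ℚ) => (p.1 : ℝ) + sval p.2) := by
    rintro x ⟨-, q, -, c, -, -, rfl⟩
    exact ⟨(q, c), rfl⟩
  exact (Set.countable_range _).mono this

lemma Dset_injective : Function.Injective Dset := by
  intro S T h
  ext n
  constructor
  · intro hn; exact mem_Dset_pow (h ▸ pow_mem_Dset hn)
  · intro hn; exact mem_Dset_pow (h ▸ pow_mem_Dset hn : tval ^ (n+1) ∈ Dset S)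

lemma equiv_eq {S T : Set ℕ} (h : DVSEquiv (Dset S) (Dset T)) : S = T := by
  obtain ⟨f, hbij, htri⟩ := h
  have hmap : ∀ x ∈ Dset S, f x ∈ Dset T := fun x hx => hbij.1 hx
  have hfpos : ∀ x ∈ Dset S, 0 < f x := fun x hx => Dset_pos (hmap x hx)
  -- Step A: doubling relation is preserved
  have hA : ∀ x ∈ Dset S, ∀ y ∈ Dset S, (x ≤ 2*y ↔ f x ≤ 2 * f y) := by
    intro x hx y hy
    have h1 : IsTriangle (Dset S) x y y ↔ x ≤ 2*y := by
      constructor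
      · rintro ⟨-,-,-,habs,-⟩
        rw [abs_sub_le_iff] at habs; linarith [habs.1]
      · intro hxy
        exact ⟨hx, hy, hy, abs_sub_le_iff.mpr ⟨by linarith, by linarith [Dset_pos hx]⟩,
          by linarith [Dset_pos hx]⟩
    have h2 : IsTriangle (Dset T) (f x) (f y) (f y) ↔ f x ≤ 2 * f y := by
      constructor
      · rintro ⟨-,-,-,habs,-⟩
        rw [abs_sub_le_iff] at habs; linarith [habs.1]
      · intro hxy
        exact ⟨hmap x hx, hmap y hy, hmap y hy,
          abs_sub_le_iff.mpr ⟨by linarith, by linarith [hfpos x hx]⟩, by linarith [hfpos x hx]⟩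
    rw [← h1, ← h2]
    exact htri x hx y hy y hy
  -- Step B: monotone
  have hmono : ∀ x ∈ Dset S, ∀ y ∈ Dset S, x ≤ y → f x ≤ f y := by
    intro x hx y hy hxy
    by_contra hlt
    push_neg at hlt
    obtain ⟨w, hw, hw1, hw2⟩ := Dset_dense T (f y / 2) (f x / 2)
      (by linarith [hfpos y hy]) (by linarith)
    obtain ⟨z, hz, rfl⟩ := hbij.2.2 hw
    have h1 : y ≤ 2 * z := (hA y hy z hz).mpr (by linarith)
    have h2 : ¬ (x ≤ 2 * z) := fun hc => by linarith [(hA x hx z hz).mp hc]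
    push_neg at h2
    linarith
  have hsmono : ∀ x ∈ Dset S, ∀ y ∈ Dset S, x < y → f x < f y := by
    intro x hx y hy hxy
    refine lt_of_le_of_ne (hmono x hx y hy hxy.le) (fun he => ?_)
    exact absurd (hbij.2.1 hx hy he) (ne_of_lt hxy)
  -- Step C: additive
  have hadd : ∀ x ∈ Dset S, ∀ y ∈ Dset S, f (x + y) = f x + f y := by
    intro x hx y hy
    have hxyΔ : x + y ∈ Dset S := add_mem_Dset hx hy
    have tri1 : IsTriangle (Dset S) x y (x+y) :=
      ⟨hx, hy, hxyΔ, abs_sub_le_iff.mpr ⟨by linarith [Dset_pos hy], by linarith [Dset_pos hx]⟩,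
        le_refl _⟩
    have hle : f (x+y) ≤ f x + f y := ((htri x hx y hy (x+y) hxyΔ).mp tri1).2.2.2.2
    have hsum : f x + f y ∈ Dset T := add_mem_Dset (hmap x hx) (hmap y hy)
    obtain ⟨z, hz, hfz⟩ := hbij.2.2 hsum
    have tri2 : IsTriangle (Dset T) (f x) (f y) (f z) := by
      refine ⟨hmap x hx, hmap y hy, hmap z hz, ?_, by rw [hfz]⟩
      rw [hfz]
      exact abs_sub_le_iff.mpr ⟨by linarith [hfpos y hy], by linarith [hfpos x hx]⟩
    have hz2 : z ≤ x + y := ((htri x hx y hy z hz).mpr tri2).2.2.2.2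
    have := hmono z hz (x+y) hxyΔ hz2
    rw [hfz] at this
    linarith
  -- Step D: f on naturals multiples
  have hnat : ∀ n : ℕ, ∀ x ∈ Dset S, ((n+1 : ℕ) : ℝ) * x ∈ Dset S ∧
      f (((n+1 : ℕ) : ℝ) * x) = ((n+1 : ℕ) : ℝ) * f x := by
    intro n
    induction n with
    | zero =>
      intro x hx
      have h01 : ((0+1:ℕ):ℝ) = 1 := by norm_num
      rw [h01, one_mul, one_mul]
      exact ⟨hx, rfl⟩
    | succ n ih =>
      intro x hx
      obtain ⟨h1, h2⟩ := ih x hx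
      have he : ((n+1+1 : ℕ) : ℝ) * x = ((n+1 : ℕ) : ℝ) * x + x := by push_cast; ring
      constructor
      · rw [he]; exact add_mem_Dset h1 hx
      · rw [he, hadd _ h1 x hx, h2]; push_cast; ring
  have hone : (1 : ℝ) ∈ Dset S := by exact_mod_cast rat_mem_Dset (S := S) one_pos
  set cc := f 1 with hcc
  have hccpos : 0 < cc := hfpos 1 hone
  -- f on positive rationals
  have hrat : ∀ q : ℚ, 0 < q → f (q : ℝ) = (q : ℝ) * cc := by
    intro q hq
    have hnum : 0 < q.num := Rat.num_pos.mpr hq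
    have ha0 : 0 < q.num.toNat := by omega
    have haR : ((q.num.toNat : ℕ) : ℝ) = (q : ℝ) * ((q.den : ℕ) : ℝ) := by
      have h1 : ((q.num.toNat : ℕ) : ℝ) = ((q.num : ℤ) : ℝ) := by
        exact_mod_cast Int.toNat_of_nonneg hnum.le
      have hd : ((q.den : ℕ) : ℝ) ≠ 0 := by have := q.pos; positivity
      rw [h1, Rat.cast_def]
      field_simp
    obtain ⟨h1, h2⟩ := hnat (q.den - 1) (q : ℝ) (rat_mem_Dset hq)
    have e1 : ((q.den - 1 + 1 : ℕ) : ℝ) = ((q.den : ℕ) : ℝ) := by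
      congr 1; have := q.pos; omega
    rw [e1] at h2
    obtain ⟨h3, h4⟩ := hnat (q.num.toNat - 1) 1 hone
    have e2 : ((q.num.toNat - 1 + 1 : ℕ) : ℝ) = ((q.num.toNat : ℕ) : ℝ) := by congr 1; omega
    rw [e2, mul_one] at h4
    have e3 : ((q.den : ℕ) : ℝ) * (q : ℝ) = ((q.num.toNat : ℕ) : ℝ) := by rw [haR]; ring
    rw [e3, h4] at h2
    have hdne : ((q.den : ℕ) : ℝ) ≠ 0 := by
      have := q.pos; positivity
    apply mul_left_cancel₀ hdne
    rw [← h2, haR]; ring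
  -- Step E: f is linear
  have hlin : ∀ x ∈ Dset S, f x = x * cc := by
    intro x hx
    have hx0 := Dset_pos hx
    rcases lt_trichotomy (f x) (x * cc) with hlt | heq | hgt
    · exfalso
      have hd : f x / cc < x := by rw [div_lt_iff₀ hccpos]; linarith
      obtain ⟨q, hq1, hq2⟩ := exists_rat_btwn hd
      have hq0 : 0 < q := by
        have h0 : (0:ℝ) < f x / cc := div_pos (hfpos x hx) hccpos
        exact_mod_cast h0.trans hq1
      have h1 : f (q:ℝ) < f x := hsmono (q:ℝ) (rat_mem_Dset hq0) x hx hq2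
      rw [hrat q hq0] at h1
      rw [div_lt_iff₀ hccpos] at hq1
      linarith
    · exact heq
    · exfalso
      have hd : x < f x / cc := by rw [lt_div_iff₀ hccpos]; linarith
      obtain ⟨q, hq1, hq2⟩ := exists_rat_btwn hd
      have hq0 : 0 < q := by exact_mod_cast hx0.trans hq1
      have h1 : f x < f (q:ℝ) := hsmono x hx (q:ℝ) (rat_mem_Dset hq0) hq1
      rw [hrat q hq0] at h1
      rw [lt_div_iff₀ hccpos] at hq2
      linarith
  -- representation of cc : it is a positive rational q0
  obtain ⟨-, q0, hq0nn, c0, hc0nat, hc0supp, hccrep⟩ := hmap 1 hone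
  rw [← hcc] at hccrep
  have hc00 : c0 = 0 := by
    by_contra hne
    obtain ⟨k, hk⟩ : ∃ k, c0 k ≠ 0 := by
      by_contra hall; push_neg at hall; exact hne (Finsupp.ext hall)
    obtain ⟨m, hm⟩ := hc0nat k
    have hm0 : m ≠ 0 := fun h => hk (by rw [hm, h]; simp)
    set N : ℕ := m + 1 with hN
    have hNq : (0:ℚ) < ((N:ℚ))⁻¹ := by positivity
    have hmem : ((((N:ℚ))⁻¹ : ℚ) : ℝ) ∈ Dset S := rat_mem_Dset hNq
    have hmemΛ : ((((N:ℚ))⁻¹ : ℚ) : ℝ) * cc ∈ Dset T := by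
      rw [← hlin _ hmem]; exact hmap _ hmem
    obtain ⟨-, q1, -, c1, hc1nat, -, hrep1⟩ := hmemΛ
    have hNR : (((N:ℚ) : ℚ) : ℝ) ≠ 0 := by positivity
    have heq2 : (q0 : ℝ) + sval c0 = ((((N:ℕ):ℚ) * q1 : ℚ) : ℝ) + sval (((N:ℕ):ℚ) • c1) := by
      rw [sval_smul, ← hccrep]
      push_cast at hrep1 ⊢
      have hN0 : ((N:ℕ):ℝ) ≠ 0 := by positivity
      field_simp at hrep1
      linarith [hrep1]
    obtain ⟨-, hceq⟩ := sval_inj heq2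
    have hck := congrArg (fun g => g k) hceq
    obtain ⟨m', hm'⟩ := hc1nat k
    simp only [Finsupp.smul_apply, smul_eq_mul, hm, hm'] at hck
    have hmm : (m:ℚ) = ((N * m' : ℕ) : ℚ) := by push_cast; exact_mod_cast hck
    have : m = N * m' := by exact_mod_cast hmm
    rcases Nat.eq_zero_or_pos m' with h0 | h0
    · rw [h0, mul_zero] at this; exact hm0 this
    · have h1 : N ≤ N * m' := Nat.le_mul_of_pos_right N h0
      rw [← this] at h1
      omega
  have hccq : cc = (q0 : ℝ) := by rw [hccrep, hc00, sval_zero, add_zero]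
  have hq0pos : (0:ℚ) < q0 := by exact_mod_cast hccq ▸ hccpos
  have hq0ne : q0 ≠ 0 := ne_of_gt hq0pos
  -- S ⊆ T
  have hST : S ⊆ T := by
    intro n hn
    have hpow : tval^(n+1) ∈ Dset S := pow_mem_Dset hn
    have hmemΛ : tval^(n+1) * cc ∈ Dset T := by
      rw [← hlin _ hpow]; exact hmap _ hpow
    obtain ⟨-, q1, -, c1, -, hc1supp, hrep⟩ := hmemΛ
    have heqn : ((0:ℚ):ℝ) + sval (Finsupp.single n q0) = (q1:ℝ) + sval c1 := by
      rw [sval_single, ← hrep, hccq]; push_cast; ring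
    obtain ⟨-, h2⟩ := sval_inj heqn
    apply hc1supp
    rw [← h2]
    simp [Finsupp.support_single_ne_zero _ hq0ne]
  -- T ⊆ S
  have hTS : T ⊆ S := by
    intro n hn
    have hpow : tval^(n+1) ∈ Dset T := pow_mem_Dset hn
    obtain ⟨x, hx, hfx⟩ := hbij.2.2 hpow
    have hxcc : x * cc = tval^(n+1) := by rw [← hlin x hx, hfx]
    obtain ⟨-, q2, -, c2, -, hc2supp, hrep2⟩ := hx
    have heqn : ((0:ℚ):ℝ) + sval (Finsupp.single n 1) = ((q0*q2 : ℚ):ℝ) + sval (q0 • c2) := by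
      rw [sval_single, sval_smul]
      have : tval^(n+1) = ((q2:ℝ) + sval c2) * (q0:ℝ) := by
        rw [← hrep2, ← hccq, hxcc]
      push_cast
      linarith [this]
    obtain ⟨-, h2⟩ := sval_inj heqn
    have h3 := congrArg (fun g => g n) h2
    simp only [Finsupp.single_apply, if_pos rfl, Finsupp.smul_apply, smul_eq_mul] at h3
    have hc2n : c2 n ≠ 0 := by
      intro h0; rw [h0, mul_zero] at h3; exact one_ne_zero h3
    exact hc2supp (Finsupp.mem_support_iff.mpr hc2n)
  exact Set.Subset.antisymm hST hTS

/-- There is a family of continuum many countable distance value sets, each dense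
in `(0, +∞)`, which are pairwise inequivalent. -/
theorem exists_continuum_pairwise_inequivalent_dvs :
    ∃ 𝒟 : Set (Set ℝ), Cardinal.mk 𝒟 = Cardinal.continuum ∧
      (∀ Δ ∈ 𝒟, IsDVS Δ ∧ Δ.Countable ∧
        ∀ a b : ℝ, 0 < a → a < b → ∃ x ∈ Δ, a < x ∧ x < b) ∧
      ∀ Δ ∈ 𝒟, ∀ Λ ∈ 𝒟, Δ ≠ Λ → ¬ DVSEquiv Δ Λ := by
  refine ⟨Set.range Dset, ?_, ?_, ?_⟩
  · rw [Cardinal.mk_range_eq _ Dset_injective, Cardinal.mk_set, Cardinal.mk_nat,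
      Cardinal.two_power_aleph0]
  · rintro Δ ⟨S, rfl⟩
    exact ⟨Dset_isDVS S, Dset_countable S, Dset_dense S⟩
  · rintro Δ ⟨S, rfl⟩ Λ ⟨T, rfl⟩ hne heq
    exact hne (congrArg Dset (equiv_eq heq))
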